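/- Let q_n := ((2n−1)!!)²/(2ⁿ n!), the n-th coefficient of the partition function of zero-dimensional quantum electrodynamics (equivalently, of the zero-dimensional sine-Gordon model). Then for every R ∈ ℕ, q_n − (1/π) · Σ_{k=0}^{R−1} (−1)^k q_k 2^{n−k} Γ(n−k) = O( 2ⁿ Γ(n−R) ) as n → ∞. (The two dominant saddle points of −sin²(x)/2 at x = ±π/2, both with value −1/2, contribute equally, producing the prefactor 1/π.) -/

import Mathlib

/-- `dfac m` is the odd double factorial `(2m-1)!! = (2m)!/(2^m m!)` as a real number. -/
noncomputable def dfac (m : ℕ) : ℝ := ((2 * m).factorial : ℝ) / (2 ^ m * (m.factorial : ℝ))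

/-- `q_n = ((2n-1)!!)²/(2^n n!)`, the `n`-th coefficient of the partition function of
zero-dimensional QED (equivalently, of the zero-dimensional sine-Gordon model). -/
noncomputable def qQED (n : ℕ) : ℝ := (dfac n) ^ 2 / (2 ^ n * (n.factorial : ℝ))


section QEDAux
open Filter Real Finset

/-- `u n = qQED n / 2^n`. -/
noncomputable def uSeq (n : ℕ) : ℝ := ((2*n).factorial : ℝ)^2 / (2^(4*n) * (n.factorial : ℝ)^3)

lemma qQED_eq (n : ℕ) : qQED n = 2^n * uSeq n := by
  unfold qQED dfac uSeq
  have h1 : ((2:ℝ))^n ≠ 0 := by positivity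
  have h2 : ((n.factorial : ℝ)) ≠ 0 := Nat.cast_ne_zero.2 n.factorial_ne_zero
  field_simp
  ring

lemma uSeq_zero : uSeq 0 = 1 := by simp [uSeq]

lemma uSeq_pos (n : ℕ) : 0 < uSeq n := by
  unfold uSeq
  positivity

lemma uSeq_succ (n : ℕ) : uSeq (n+1) = uSeq n * (2*(n:ℝ)+1)^2 / (4*((n:ℝ)+1)) := by
  unfold uSeq
  have e1 : 2*(n+1) = (2*n+1)+1 := by ring
  rw [e1, Nat.factorial_succ, Nat.factorial_succ, Nat.factorial_succ]
  have h2 : ((n.factorial : ℝ)) ≠ 0 := Nat.cast_ne_zero.2 n.factorial_ne_zero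
  have h3 : (((2*n).factorial : ℝ)) ≠ 0 := Nat.cast_ne_zero.2 (2*n).factorial_ne_zero
  have h4 : ((2:ℝ))^(4*n) ≠ 0 := by positivity
  have e2 : (4:ℕ)*(n+1) = 4*n+4 := by ring
  rw [e2, pow_add]
  push_cast
  field_simp
  ring


lemma uSeq_eq (n : ℕ) : uSeq n = ((2*n).factorial : ℝ)^2 / (2^(4*n) * (n.factorial : ℝ)^3) := rfl

/-- `Pfun k n = 1/((n-1)(n-2)...(n-k))`. -/
noncomputable def Pfun (k n : ℕ) : ℝ := ∏ j ∈ Finset.range k, ((n:ℝ) - 1 - j)⁻¹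

lemma Pfun_zero (n : ℕ) : Pfun 0 n = 1 := by simp [Pfun]

lemma Pfun_succ (k n : ℕ) : Pfun (k+1) n = Pfun k n * ((n:ℝ) - 1 - k)⁻¹ := by
  simp [Pfun, Finset.prod_range_succ]; ring

lemma Pfun_pos {k n : ℕ} (h : k + 1 ≤ n) : 0 < Pfun k n := by
  apply Finset.prod_pos
  intro j hj
  rw [Finset.mem_range] at hj
  have : (j:ℝ) + 1 ≤ (k:ℝ) := by exact_mod_cast hj
  have hn : (k:ℝ) + 1 ≤ (n:ℝ) := by exact_mod_cast h
  have : (0:ℝ) < (n:ℝ) - 1 - j := by linarith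
  positivity

lemma Pfun_shift {k n : ℕ} (h : k + 2 ≤ n) :
    Pfun k (n+1) * (n:ℝ) = Pfun k n * ((n:ℝ) - k) := by
  induction k with
  | zero => simp [Pfun_zero]
  | succ k ih =>
    have hk : k + 2 ≤ n := by omega
    have ih' := ih hk
    have h1 : ((n:ℝ) - k) ≠ 0 := by
      have : (k:ℝ) + 3 ≤ (n:ℝ) := by exact_mod_cast (by omega : k + 3 ≤ n)
      intro hc; rw [sub_eq_zero] at hc; push_cast at hc; linarith
    have h2 : ((n:ℝ) - 1 - k) ≠ 0 := by
      have : (k:ℝ) + 3 ≤ (n:ℝ) := by exact_mod_cast (by omega : k + 3 ≤ n)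
      intro hc; rw [sub_eq_zero] at hc ; linarith [sub_eq_zero.1 (by linarith : ((n:ℝ)-1) - k = 0)]
    rw [Pfun_succ, Pfun_succ]
    have e1 : ((n+1 : ℕ):ℝ) - 1 - k = (n:ℝ) - k := by push_cast; ring
    rw [e1]
    push_cast
    field_simp
    nlinarith [ih']

lemma Pfun_le_one {k n : ℕ} (h : k + 1 ≤ n) : Pfun k n ≤ 1 := by
  apply Finset.prod_le_one
  · intro j hj
    rw [Finset.mem_range] at hj
    have hn : (k:ℝ) + 1 ≤ (n:ℝ) := by exact_mod_cast h
    have : (j:ℝ) + 1 ≤ (k:ℝ) := by exact_mod_cast hj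
    have : (0:ℝ) < (n:ℝ) - 1 - j := by linarith
    positivity
  · intro j hj
    rw [Finset.mem_range] at hj
    have hn : (k:ℝ) + 1 ≤ (n:ℝ) := by exact_mod_cast h
    have : (j:ℝ) + 1 ≤ (k:ℝ) := by exact_mod_cast hj
    have h1 : (1:ℝ) ≤ (n:ℝ) - 1 - j := by linarith
    rw [inv_le_one_iff₀]; right; exact h1

lemma Pfun_le {k n : ℕ} (hk : 1 ≤ k) (h : k + 1 ≤ n) : Pfun k n ≤ ((n:ℝ) - k)⁻¹ := by
  obtain ⟨m, rfl⟩ := Nat.exists_eq_add_of_le hk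
  rw [add_comm 1 m, Pfun_succ]
  have hm : m + 1 ≤ n := by omega
  have e : (n:ℝ) - 1 - m = (n:ℝ) - (m+1 : ℕ) := by push_cast; ring
  rw [e]
  have hpos : (0:ℝ) < (n:ℝ) - (m+1:ℕ) := by
    have : ((m:ℝ)+1) + 1 ≤ (n:ℝ) := by exact_mod_cast (by omega : m + 1 + 1 ≤ n)
    push_cast; linarith
  calc Pfun m n * ((n:ℝ) - (m+1:ℕ))⁻¹ ≤ 1 * ((n:ℝ) - (m+1:ℕ))⁻¹ := by
        apply mul_le_mul_of_nonneg_right (Pfun_le_one hm) (by positivity)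
    _ = ((n:ℝ) - (m+1:ℕ))⁻¹ := one_mul _

lemma Pfun_tendsto {k : ℕ} (hk : 1 ≤ k) :
    Filter.Tendsto (fun n => Pfun k n) Filter.atTop (nhds 0) := by
  have hub : Filter.Tendsto (fun n : ℕ => ((n:ℝ) - k)⁻¹) Filter.atTop (nhds 0) := by
    apply Filter.Tendsto.inv_tendsto_atTop
    apply Filter.tendsto_atTop_add_const_right
    exact tendsto_natCast_atTop_atTop
  apply squeeze_zero' (g := fun n : ℕ => ((n:ℝ) - k)⁻¹)
  · filter_upwards [Filter.eventually_ge_atTop (k+1)] with n hn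
    exact le_of_lt (Pfun_pos hn)
  · filter_upwards [Filter.eventually_ge_atTop (k+1)] with n hn
    exact Pfun_le hk hn
  · exact hub

noncomputable def Sfun (R n : ℕ) : ℝ := ∑ k ∈ Finset.range R, (-1:ℝ)^k * uSeq k * Pfun k n

noncomputable def Dfun (R n : ℕ) : ℝ := -((-1:ℝ)^R) * R * uSeq R / n * Pfun R n

noncomputable def ffun (n : ℕ) : ℝ := Real.pi * n * uSeq n / (n.factorial : ℝ)

noncomputable def efun (R n : ℕ) : ℝ := ffun n - Sfun R n

noncomputable def rho (n : ℕ) : ℝ := (2*(n:ℝ)+1)^2 / (4*((n:ℝ)+1)*n)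

lemma one_le_rho {n : ℕ} (h : 1 ≤ n) : 1 ≤ rho n := by
  have hn : (1:ℝ) ≤ (n:ℝ) := by exact_mod_cast h
  rw [rho, le_div_iff₀ (by positivity)]
  nlinarith

lemma ffun_succ {n : ℕ} (h : 1 ≤ n) : ffun (n+1) = rho n * ffun n := by
  have hn : (1:ℝ) ≤ (n:ℝ) := by exact_mod_cast h
  have h2 : ((n.factorial : ℝ)) ≠ 0 := Nat.cast_ne_zero.2 n.factorial_ne_zero
  unfold ffun rho
  rw [uSeq_succ, Nat.factorial_succ]
  push_cast
  field_simp

lemma Sfun_rec {R n : ℕ} (h : R + 1 ≤ n) :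
    rho n * Sfun R n - Sfun R (n+1) = Dfun R (n+1) := by
  induction R with
  | zero => simp [Sfun, Dfun]
  | succ R ih =>
    have hR : R + 1 ≤ n := by omega
    have hR2 : R + 2 ≤ n := h
    have ih' := ih hR
    have hn : (R:ℝ) + 2 ≤ (n:ℝ) := by exact_mod_cast h
    have hsub : (0:ℝ) < (n:ℝ) - R := by linarith
    have hn0 : (0:ℝ) < (n:ℝ) := by linarith
    have hSucc : ∀ m, Sfun (R+1) m = Sfun R m + (-1:ℝ)^R * uSeq R * Pfun R m := by
      intro m; simp [Sfun, Finset.sum_range_succ]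
    rw [hSucc, hSucc]
    have key : Dfun (R+1) (n+1) - Dfun R (n+1)
        = (-1:ℝ)^R * uSeq R * (rho n * Pfun R n - Pfun R (n+1)) := by
      unfold Dfun rho
      rw [uSeq_succ, Pfun_succ]
      have e1 : ((n+1:ℕ):ℝ) - 1 - R = (n:ℝ) - R := by push_cast; ring
      rw [e1]
      have hPshift : Pfun R n = Pfun R (n+1) * (n:ℝ) / ((n:ℝ) - R) := by
        rw [eq_div_iff (ne_of_gt hsub)]
        linarith [Pfun_shift hR2]
      rw [hPshift]
      have h1 : ((n:ℝ)+1) ≠ 0 := by linarith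
      push_cast
      field_simp
      ring
    linarith [key, ih']

lemma efun_rec {R n : ℕ} (h : R + 1 ≤ n) :
    efun R (n+1) = rho n * efun R n + Dfun R (n+1) := by
  unfold efun
  rw [ffun_succ (by omega : 1 ≤ n)]
  have := Sfun_rec h
  ring_nf
  ring_nf at this ⊢
  linarith

lemma ffun_eq_stirling {n : ℕ} (h : 1 ≤ n) :
    ffun n = Real.pi * (Stirling.stirlingSeq (2*n))^2 / (Stirling.stirlingSeq n)^4 := by
  have hn : (1:ℝ) ≤ (n:ℝ) := by exact_mod_cast h
  have hn0 : (0:ℝ) < (n:ℝ) := by linarith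
  have he : (0:ℝ) < Real.exp 1 := Real.exp_pos 1
  have hq : (0:ℝ) < (n:ℝ)/Real.exp 1 := by positivity
  have hs2 : (Stirling.stirlingSeq n)^2 = (n.factorial:ℝ)^2 / (2*n*((n:ℝ)/Real.exp 1)^(2*n)) := by
    unfold Stirling.stirlingSeq
    rw [div_pow, mul_pow, Real.sq_sqrt (by positivity), ← pow_mul]
    ring_nf
  have hs4 : (Stirling.stirlingSeq n)^4 = (n.factorial:ℝ)^4 / (2*n*((n:ℝ)/Real.exp 1)^(2*n))^2 := by
    have : (Stirling.stirlingSeq n)^4 = ((Stirling.stirlingSeq n)^2)^2 := by ring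
    rw [this, hs2, div_pow, ← pow_mul]
  have hs2n : (Stirling.stirlingSeq (2*n))^2
      = ((2*n).factorial:ℝ)^2 / (4*n*((n:ℝ)/Real.exp 1)^(4*n)*2^(4*n)) := by
    unfold Stirling.stirlingSeq
    rw [div_pow, mul_pow, Real.sq_sqrt (by positivity), ← pow_mul]
    have e1 : ((2*n : ℕ):ℝ)/Real.exp 1 = 2*((n:ℝ)/Real.exp 1) := by push_cast; ring
    rw [e1, mul_pow]
    push_cast
    ring_nf
  rw [hs2n, hs4]; unfold ffun; rw [uSeq_eq]
  have h1 : ((n.factorial:ℝ)) ≠ 0 := Nat.cast_ne_zero.2 n.factorial_ne_zero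
  have h2 : ((n:ℝ)/Real.exp 1)^(4*n) ≠ 0 := by positivity
  have h3 : ((n:ℝ)/Real.exp 1)^(2*n) ≠ 0 := by positivity
  have h4 : ((2:ℝ))^(4*n) ≠ 0 := by positivity
  field_simp
  ring_nf

lemma ffun_tendsto : Filter.Tendsto ffun Filter.atTop (nhds 1) := by
  have hs := Stirling.tendsto_stirlingSeq_sqrt_pi
  have h2 : Filter.Tendsto (fun n : ℕ => Stirling.stirlingSeq (2*n)) Filter.atTop (nhds (√π)) :=
    hs.comp (Filter.tendsto_atTop_atTop.2 (fun b => ⟨b, fun a ha => by omega⟩))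
  have hlim : Filter.Tendsto (fun n : ℕ =>
      Real.pi * (Stirling.stirlingSeq (2*n))^2 / (Stirling.stirlingSeq n)^4)
      Filter.atTop (nhds (Real.pi * (√π)^2 / (√π)^4)) := by
    apply Filter.Tendsto.div
    · exact (tendsto_const_nhds.mul (h2.pow 2))
    · exact hs.pow 4
    · have : (√π)^4 = π^2 := by
        rw [(by ring : (√π)^4 = ((√π)^2)^2), Real.sq_sqrt Real.pi_pos.le]
      rw [this]
      positivity
  have heq : Real.pi * (√π)^2 / (√π)^4 = 1 := by
    rw [(by ring : (√π)^4 = ((√π)^2)^2), Real.sq_sqrt Real.pi_pos.le]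
    field_simp
  rw [heq] at hlim
  apply hlim.congr'
  filter_upwards [Filter.eventually_ge_atTop 1] with n hn
  exact (ffun_eq_stirling hn).symm

lemma Sfun_tendsto {R : ℕ} (hR : 1 ≤ R) :
    Filter.Tendsto (fun n => Sfun R n) Filter.atTop (nhds 1) := by
  have : ∀ k ∈ Finset.range R, Filter.Tendsto (fun n => (-1:ℝ)^k * uSeq k * Pfun k n)
      Filter.atTop (nhds (if k = 0 then 1 else 0)) := by
    intro k _
    rcases Nat.eq_zero_or_pos k with rfl | hk
    · simp only [if_pos rfl]
      have : (fun n => (-1:ℝ)^0 * uSeq 0 * Pfun 0 n) = fun _ => 1 := by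
        funext n; rw [Pfun_zero, uSeq_zero]; ring
      rw [this]; exact tendsto_const_nhds
    · rw [if_neg (by omega)]
      have := (Pfun_tendsto hk).const_mul ((-1:ℝ)^k * uSeq k)
      simpa using this
  have h := tendsto_finset_sum (Finset.range R) this
  have he : ∑ k ∈ Finset.range R, (if k = 0 then (1:ℝ) else 0) = 1 := by
    rw [Finset.sum_ite_eq' (Finset.range R) 0 (fun _ => (1:ℝ))]
    rw [if_pos (Finset.mem_range.2 (by omega))]
  rw [he] at h
  exact h

lemma efun_tendsto {R : ℕ} (hR : 1 ≤ R) :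
    Filter.Tendsto (fun n => efun R n) Filter.atTop (nhds 0) := by
  have := ffun_tendsto.sub (Sfun_tendsto hR)
  simpa [efun] using this

lemma Dfun_sign {R m : ℕ} (h : R + 1 ≤ m) : (-1:ℝ)^R * Dfun R m ≤ 0 := by
  unfold Dfun
  have hsq : ((-1:ℝ)^R) * ((-1:ℝ)^R) = 1 := by
    rw [← pow_add, Even.neg_one_pow ⟨R, rfl⟩]
  have hP := (Pfun_pos h).le
  have hm : (0:ℝ) < (m:ℝ) := by exact_mod_cast (by omega : 0 < m)
  have hu := (uSeq_pos R).le
  have e : (-1:ℝ)^R * (-((-1:ℝ)^R) * R * uSeq R / m * Pfun R m)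
      = -(((-1:ℝ)^R * (-1:ℝ)^R) * ((R:ℝ) * uSeq R / m * Pfun R m)) := by ring
  rw [e, hsq, one_mul]
  have : (0:ℝ) ≤ (R:ℝ) * uSeq R / m * Pfun R m := by positivity
  linarith

lemma efun_sign {R : ℕ} (hR : 1 ≤ R) : ∀ {n : ℕ}, R + 1 ≤ n → 0 ≤ (-1:ℝ)^R * efun R n := by
  intro n hn
  by_contra hc
  push_neg at hc
  set δ := -((-1:ℝ)^R * efun R n) with hδ
  have hδpos : 0 < δ := by simp only [hδ]; linarith
  have key : ∀ m : ℕ, (-1:ℝ)^R * efun R (n+m) ≤ -δ := by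
    intro m
    induction m with
    | zero => simp [hδ]
    | succ m ih =>
      have hnm : R + 1 ≤ n + m := by omega
      have hrec := efun_rec hnm
      have hrho := one_le_rho (by omega : 1 ≤ n + m)
      have hD := Dfun_sign (by omega : R + 1 ≤ n + m + 1)
      have heq2 : (-1:ℝ)^R * efun R (n+m+1)
          = rho (n+m) * ((-1:ℝ)^R * efun R (n+m)) + (-1:ℝ)^R * Dfun R (n+m+1) := by
        rw [hrec]; ring
      show (-1:ℝ)^R * efun R ((n+m)+1) ≤ -δ
      rw [heq2]
      have h1 : rho (n+m) * ((-1:ℝ)^R * efun R (n+m)) ≤ 1 * ((-1:ℝ)^R * efun R (n+m)) := by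
        apply mul_le_mul_of_nonpos_right hrho
        linarith
      linarith
  have hev : ∀ᶠ m : ℕ in Filter.atTop, |efun R m| < δ := by
    have := (efun_tendsto hR).abs
    simp only [abs_zero] at this
    exact Filter.Tendsto.eventually_lt_const hδpos (by simpa using this)
  rw [Filter.eventually_atTop] at hev
  obtain ⟨N, hN⟩ := hev
  have h1 := key N
  have h2 := hN (n+N) (by omega)
  have : |(-1:ℝ)^R * efun R (n+N)| = |efun R (n+N)| := by
    rw [abs_mul, abs_pow, abs_neg, abs_one, one_pow, one_mul]
  nlinarith [abs_nonneg (efun R (n+N)), le_abs_self (-((-1:ℝ)^R * efun R (n+N))), abs_neg ((-1:ℝ)^R * efun R (n+N))]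

lemma efun_sign' : ∀ R : ℕ, ∀ {n : ℕ}, R + 2 ≤ n → 0 ≤ (-1:ℝ)^R * efun R n := by
  intro R n hn
  rcases Nat.eq_zero_or_pos R with rfl | hR
  · simp only [pow_zero, one_mul]
    have : efun 0 n = ffun n := by simp [efun, Sfun]
    rw [this, ffun]
    have h1 := (uSeq_pos n).le
    have h2 : (0:ℝ) ≤ (n:ℝ) := Nat.cast_nonneg n
    have h3 : (0:ℝ) ≤ (n.factorial : ℝ) := Nat.cast_nonneg _
    have := Real.pi_pos.le
    positivity
  · exact efun_sign hR (by omega)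

lemma abs_efun_le (R : ℕ) {n : ℕ} (hn : R + 3 ≤ n) : |efun R n| ≤ uSeq R * Pfun R n := by
  have h1 := efun_sign' R (by omega : R + 2 ≤ n)
  have h2 := efun_sign' (R+1) (by omega : (R+1) + 2 ≤ n)
  have hstep : efun (R+1) n = efun R n - (-1:ℝ)^R * uSeq R * Pfun R n := by
    unfold efun Sfun
    rw [Finset.sum_range_succ]
    ring
  have hsq : ((-1:ℝ)^R) * ((-1:ℝ)^R) = 1 := by
    rw [← pow_add, Even.neg_one_pow ⟨R, rfl⟩]
  have h2' : 0 ≤ -((-1:ℝ)^R * efun R n) + uSeq R * Pfun R n := by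
    have e : (-1:ℝ)^(R+1) * efun (R+1) n
        = -((-1:ℝ)^R * efun R n) + uSeq R * Pfun R n := by
      rw [hstep, pow_succ]
      linear_combination (uSeq R * Pfun R n) * hsq
    linarith [e ▸ h2]
  have habs : |efun R n| = (-1:ℝ)^R * efun R n := by
    rcases Nat.even_or_odd R with he | ho
    · rw [he.neg_one_pow, one_mul]
      rw [he.neg_one_pow, one_mul] at h1
      exact abs_of_nonneg h1
    · rw [ho.neg_one_pow, neg_one_mul]
      rw [ho.neg_one_pow, neg_one_mul] at h1
      rw [abs_of_nonpos (by linarith)]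
  rw [habs]
  linarith

lemma fact_Pfun : ∀ (k m : ℕ), k ≤ m →
    (((m - k).factorial : ℝ)) = Pfun k (m+1) * (m.factorial : ℝ) := by
  intro k
  induction k with
  | zero => intro m _; simp [Pfun_zero]
  | succ k ih =>
    intro m h
    have hk : k ≤ m := by omega
    have ih' := ih m hk
    have ht : 1 ≤ m - k := by omega
    have e1 : m - (k+1) = (m - k) - 1 := by omega
    have e2 : (m - k) = ((m - k) - 1) + 1 := by omega
    have e3 : ((m+1:ℕ):ℝ) - 1 - k = ((m - k : ℕ):ℝ) := by
      rw [Nat.cast_sub hk]; push_cast; ring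
    rw [Pfun_succ, e3, e1]
    have hfac : (((m-k).factorial : ℝ)) = ((m-k:ℕ):ℝ) * (((m-k) - 1).factorial : ℝ) := by
      rw [e2, Nat.factorial_succ]; push_cast; ring
    have hne : ((m-k:ℕ):ℝ) ≠ 0 := Nat.cast_ne_zero.2 (by omega)
    rw [hfac] at ih'
    have hre : Pfun k (m+1) * (((m-k:ℕ):ℝ))⁻¹ * (m.factorial : ℝ)
        = (Pfun k (m+1) * (m.factorial : ℝ)) * (((m-k:ℕ):ℝ))⁻¹ := by ring
    rw [hre, ← ih']
    have hne2 : ((m:ℝ) - (k:ℝ)) ≠ 0 := by rw [← Nat.cast_sub hk]; exact hne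
    field_simp


end QEDAux

/-- For every `R`,
`q_n - (1/π) Σ_{k<R} (-1)^k q_k 2^{n-k} Γ(n-k) = O(2^n Γ(n-R))` as `n → ∞`. -/
theorem stmt10 (R : ℕ) :
    (fun n : ℕ => qQED n - 1 / Real.pi *
        ∑ k ∈ Finset.range R,
          (-1 : ℝ) ^ k * qQED k * (2 : ℝ) ^ ((n : ℤ) - (k : ℤ)) *
            Real.Gamma ((n : ℝ) - (k : ℝ)))
      =O[Filter.atTop] fun n : ℕ => (2 : ℝ) ^ n * Real.Gamma ((n : ℝ) - (R : ℝ)) := by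
  rw [Asymptotics.isBigO_iff]
  refine ⟨uSeq R / Real.pi, ?_⟩
  filter_upwards [Filter.eventually_ge_atTop (R+3)] with n hn
  obtain ⟨m, rfl⟩ : ∃ m, n = m + 1 := ⟨n - 1, by omega⟩
  have hRm : R + 2 ≤ m := by omega
  have hπ : (0:ℝ) < Real.pi := Real.pi_pos
  have hfacm : ((m.factorial : ℝ)) ≠ 0 := Nat.cast_ne_zero.2 m.factorial_ne_zero
  -- Gamma at the comparator
  have hGamR : Real.Gamma (((m+1:ℕ):ℝ) - (R:ℝ)) = (((m - R).factorial : ℝ)) := by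
    have e : ((m+1:ℕ):ℝ) - (R:ℝ) = ((m - R : ℕ):ℝ) + 1 := by
      rw [Nat.cast_sub (by omega : R ≤ m)]; push_cast; ring
    rw [e, Real.Gamma_nat_eq_factorial]
  -- rewrite each summand
  have hsum : ∀ k ∈ Finset.range R,
      (-1 : ℝ) ^ k * qQED k * (2 : ℝ) ^ (((m+1:ℕ) : ℤ) - (k : ℤ)) *
        Real.Gamma (((m+1:ℕ) : ℝ) - (k : ℝ))
      = 2^(m+1) * (m.factorial : ℝ) * ((-1:ℝ)^k * uSeq k * Pfun k (m+1)) := by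
    intro k hk
    rw [Finset.mem_range] at hk
    have hkm : k ≤ m := by omega
    have hGam : Real.Gamma (((m+1:ℕ):ℝ) - (k:ℝ)) = (((m - k).factorial : ℝ)) := by
      have e : ((m+1:ℕ):ℝ) - (k:ℝ) = ((m - k : ℕ):ℝ) + 1 := by
        rw [Nat.cast_sub hkm]; push_cast; ring
      rw [e, Real.Gamma_nat_eq_factorial]
    have hzpow : (2:ℝ) ^ (((m+1:ℕ) : ℤ) - (k : ℤ)) = 2^(m+1) / 2^k := by
      rw [zpow_sub₀ (by norm_num : (2:ℝ) ≠ 0), zpow_natCast, zpow_natCast]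
    rw [hGam, hzpow, qQED_eq, fact_Pfun k m hkm]
    have h2k : ((2:ℝ))^k ≠ 0 := by positivity
    field_simp
  rw [Finset.sum_congr rfl hsum, ← Finset.mul_sum]
  -- main expression
  have hu : uSeq (m+1) = ffun (m+1) * (m.factorial : ℝ) / Real.pi := by
    unfold ffun
    have hfs : (((m+1).factorial : ℝ)) = ((m:ℝ)+1) * (m.factorial : ℝ) := by
      rw [Nat.factorial_succ]; push_cast; ring
    rw [hfs]
    have hm1 : ((m:ℝ)+1) ≠ 0 := by positivity
    field_simp
    push_cast
    ring
  have hexpr : qQED (m+1) - 1/Real.pi *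
      (2^(m+1) * (m.factorial : ℝ) * ∑ k ∈ Finset.range R, (-1:ℝ)^k * uSeq k * Pfun k (m+1))
      = 2^(m+1) * (m.factorial : ℝ) / Real.pi * efun R (m+1) := by
    rw [qQED_eq, hu]
    unfold efun Sfun
    field_simp
  rw [hexpr, hGamR]
  simp only [Real.norm_eq_abs]
  have hP : 0 < Pfun R (m+1) := Pfun_pos (by omega)
  have hbound := abs_efun_le R (by omega : R + 3 ≤ m + 1)
  have hfp : ((m-R).factorial : ℝ) = Pfun R (m+1) * (m.factorial : ℝ) :=
    fact_Pfun R m (by omega)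
  have hC : (0:ℝ) ≤ 2^(m+1) * (m.factorial : ℝ) / Real.pi := by positivity
  rw [abs_mul, abs_of_nonneg hC]
  have h1 : 2^(m+1) * (m.factorial : ℝ) / Real.pi * |efun R (m+1)|
      ≤ 2^(m+1) * (m.factorial : ℝ) / Real.pi * (uSeq R * Pfun R (m+1)) :=
    mul_le_mul_of_nonneg_left hbound hC
  refine h1.trans (le_of_eq ?_)
  rw [abs_of_nonneg (by positivity : (0:ℝ) ≤ (2:ℝ)^(m+1) * ((m-R).factorial : ℝ))]
  rw [hfp]
  field_simp
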